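/- Measurement update equivalence (Lemma 3, matrix form). Let Σ_L ∈ Matrix m m ℝ, C_L ∈ Matrix p m ℝ, R ∈ Matrix p p ℝ, and let M ∈ Matrix m m ℝ be invertible. Define Σ_R := M * Σ_L * Mᵀ, C_R := C_L * M⁻¹, S_L := C_L * Σ_L * C_Lᵀ + R, S_R := C_R * Σ_R * C_Rᵀ + R, and assume S_L is invertible. Define the Kalman gains K_L := Σ_L * C_Lᵀ * S_L⁻¹ and K_R := Σ_R * C_Rᵀ * S_R⁻¹. Then: (i) S_R = S_L; (ii) K_R = M * K_L, so for every residual z ∈ ℝ^p the updated means satisfy μ_R⁺ := K_R ⬝ z = M ⬝ (K_L ⬝ z) = M ⬝ μ_L⁺; and (iii) the updated covariances satisfy (1 − K_R * C_R) * Σ_R = M * ((1 − K_L * C_L) * Σ_L) * Mᵀ. -/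
import Mathlib


open Matrix

/-- **Measurement update equivalence** (Lemma 3, matrix form).
With `Σ_R = M Σ_L Mᵀ` and `C_R = C_L M⁻¹the innovation covariances agree,
the gains satisfy `K_R = M K_L` (so the updated means satisfy
`K_R z = M (K_L z)` for every residual `z`), and the updated covariances
satisfy `(1 - K_R C_R) Σ_R = M ((1 - K_L C_L) Σ_L) Mᵀ`. -/
theorem measurement_update_equivalence {m p : ℕ}
    (SigL : Matrix (Fin m) (Fin m) ℝ)
    (CL : Matrix (Fin p) (Fin m) ℝ)
    (R : Matrix (Fin p) (Fin p) ℝ)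
    (M : Matrix (Fin m) (Fin m) ℝ) (hM : IsUnit M)
    (SigR : Matrix (Fin m) (Fin m) ℝ) (hSigR : SigR = M * SigL * Mᵀ)
    (CR : Matrix (Fin p) (Fin m) ℝ) (hCR : CR = CL * M⁻¹)
    (SL SR : Matrix (Fin p) (Fin p) ℝ)
    (hSL : SL = CL * SigL * CLᵀ + R)
    (hSR : SR = CR * SigR * CRᵀ + R)
    (hSLunit : IsUnit SL)
    (KL : Matrix (Fin m) (Fin p) ℝ) (hKL : KL = SigL * CLᵀ * SL⁻¹)
    (KR : Matrix (Fin m) (Fin p) ℝ) (hKR : KR = SigR * CRᵀ * SR⁻¹) :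
    SR = SL ∧
    (KR = M * KL ∧ ∀ z : Fin p → ℝ, KR *ᵥ z = M *ᵥ (KL *ᵥ z)) ∧
    (1 - KR * CR) * SigR = M * ((1 - KL * CL) * SigL) * Mᵀ := by

  have hMd : IsUnit M.det := (isUnit_iff_isUnit_det M).mp hM
  have hMtd : IsUnit Mᵀ.det := by simpa using hMd
  have hSRSL : SR = SL := by
    rw [hSR, hSL, hCR, hSigR, transpose_mul, transpose_nonsing_inv]
    congr 1
    simp only [Matrix.mul_assoc]
    rw [Matrix.nonsing_inv_mul_cancel_left _ _ hMd,
        Matrix.mul_nonsing_inv_cancel_left _ _ hMtd]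
  have hKRM : KR = M * KL := by
    rw [hKR, hKL, hSRSL, hSigR, hCR, transpose_mul, transpose_nonsing_inv]
    simp only [Matrix.mul_assoc]
    rw [Matrix.mul_nonsing_inv_cancel_left _ _ hMtd]
  refine ⟨hSRSL, ⟨hKRM, fun z => ?_⟩, ?_⟩
  · rw [hKRM, ← mulVec_mulVec]
  · rw [hKRM, hCR, hSigR, Matrix.sub_mul, Matrix.sub_mul, Matrix.one_mul,
      Matrix.mul_sub, Matrix.one_mul]
    congr 1
    simp only [Matrix.mul_assoc]
    rw [Matrix.nonsing_inv_mul_cancel_left _ _ hMd, Matrix.sub_mul]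
    simp only [Matrix.mul_assoc]
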